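/- Let L̃ be the generator of the triad model: L̃f = (B̃(x,x) + C̃x)·∇f + (σ̃²/2)Λ̃ : ∇²f, where B̃(x,x) = (B̃₁x₂x₃, B̃₂x₁x₃, B̃₃x₁x₂)^T, C̃ = L̃−Λ̃, and Λ̃ = −(C̃ + C̃^T)/2. Then for every n ≥ 1, L̃ⁿx is a vector of polynomials in x of total degree at most n+1. Moreover, for every multi-index α with |α| odd, the coefficient of x^α in L̃ⁿx depends on (B̃₁, B̃₂, B̃₃) only through the quadratic combinations B̃ᵢB̃ⱼ (i.e., it is invariant under (B̃₁,B̃₂,B̃₃) ↦ (−B̃₁,−B̃₂,−B̃₃)). -/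

import Mathlib

open Matrix
section TriadAux
open MvPolynomial

noncomputable def proj3 (l : Fin 3) : (Fin 3 → ℝ) →L[ℝ] ℝ := ContinuousLinearMap.proj l

lemma hasFDerivAt_eval (P : MvPolynomial (Fin 3) ℝ) (x : Fin 3 → ℝ) :
    HasFDerivAt (fun y : Fin 3 → ℝ => MvPolynomial.eval y P)
      (∑ l, MvPolynomial.eval x (pderiv l P) • proj3 l) x := by
  induction P using MvPolynomial.induction_on with
  | C a =>
      simp only [eval_C, pderiv_C, map_zero, zero_smul, Finset.sum_const_zero]
      exact hasFDerivAt_const _ _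
  | add p q hp hq =>
      simp only [eval_add, map_add, add_smul, Finset.sum_add_distrib]
      exact hp.add hq
  | mul_X p i hp =>
      have hX : HasFDerivAt (fun y : Fin 3 → ℝ => y i) (proj3 i) x :=
        (ContinuousLinearMap.proj i : (Fin 3 → ℝ) →L[ℝ] ℝ).hasFDerivAt
      have h := hp.mul hX
      have heq : (MvPolynomial.eval x p) • proj3 i
            + (x i) • (∑ l, MvPolynomial.eval x (pderiv l p) • proj3 l)
          = ∑ l, MvPolynomial.eval x (pderiv l (p * X i)) • proj3 l := by
        refine ContinuousLinearMap.ext fun v => ?_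
        fin_cases i <;>
          simp [proj3, Fin.sum_univ_three, pderiv_mul, Pi.single_apply,
            smul_eq_mul, mul_comm, mul_left_comm] <;> ring
      rw [← heq]
      simpa only [eval_mul, eval_X, Pi.mul_def] using h

lemma fderiv_eval_single (P : MvPolynomial (Fin 3) ℝ) (x : Fin 3 → ℝ) (l : Fin 3) :
    fderiv ℝ (fun y : Fin 3 → ℝ => MvPolynomial.eval y P) x (Pi.single l 1)
      = MvPolynomial.eval x (pderiv l P) := by
  rw [(hasFDerivAt_eval P x).fderiv]
  simp [proj3, Pi.single_apply, Finset.sum_ite_eq]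

/-- The generator as an operator on polynomials. -/
noncomputable def Dop (σt : ℝ) (Ct : Matrix (Fin 3) (Fin 3) ℝ) (b₁ b₂ b₃ : ℝ)
    (P : MvPolynomial (Fin 3) ℝ) : MvPolynomial (Fin 3) ℝ :=
  (∑ l, ((![C b₁ * X 1 * X 2, C b₂ * X 0 * X 2, C b₃ * X 0 * X 1] : Fin 3 → MvPolynomial (Fin 3) ℝ) l
        + ∑ j, C (Ct l j) * X j) * pderiv l P)
  + C (σt ^ 2 / 2) * ∑ l, ∑ m, C ((-((2:ℝ)⁻¹) • (Ct + Matrix.transpose Ct)) l m) *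
      pderiv m (pderiv l P)

lemma gen_step (σt : ℝ) (Ct : Matrix (Fin 3) (Fin 3) ℝ) (b₁ b₂ b₃ : ℝ)
    (P : MvPolynomial (Fin 3) ℝ) (x : Fin 3 → ℝ) :
    (∑ l, ((![b₁ * x 1 * x 2, b₂ * x 0 * x 2, b₃ * x 0 * x 1] : Fin 3 → ℝ) l
            + Ct.mulVec x l) * fderiv ℝ (fun y => MvPolynomial.eval y P) x (Pi.single l 1))
      + (σt ^ 2 / 2) * ∑ l, ∑ m, (-((2:ℝ)⁻¹) • (Ct + Ctᵀ)) l m *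
          fderiv ℝ (fun y => fderiv ℝ (fun z => MvPolynomial.eval z P) y (Pi.single l 1)) x
            (Pi.single m 1)
      = MvPolynomial.eval x (Dop σt Ct b₁ b₂ b₃ P) := by
  have h2 : ∀ l m : Fin 3,
      fderiv ℝ (fun y => fderiv ℝ (fun z => MvPolynomial.eval z P) y (Pi.single l 1)) x
          (Pi.single m 1)
        = MvPolynomial.eval x (pderiv m (pderiv l P)) := by
    intro l m
    have : (fun y => fderiv ℝ (fun z => MvPolynomial.eval z P) y (Pi.single l 1))
        = fun y => MvPolynomial.eval y (pderiv l P) := funext fun y => fderiv_eval_single P y l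
    rw [this, fderiv_eval_single]
  simp only [fderiv_eval_single, h2, Dop, map_add, _root_.map_mul, map_sum, eval_C, eval_X,
    Matrix.mulVec, dotProduct]
  congr 1
  · refine Finset.sum_congr rfl fun l _ => ?_
    congr 1
    fin_cases l <;> simp

lemma totalDegree_pderiv_le' (l : Fin 3) (P : MvPolynomial (Fin 3) ℝ) {d : ℕ}
    (h : P.totalDegree ≤ d + 1) : (pderiv l P).totalDegree ≤ d := by
  conv_lhs => rw [P.as_sum]
  rw [map_sum]
  refine totalDegree_finsetSum_le fun s hs => ?_
  rw [pderiv_monomial]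
  by_cases h0 : s l = 0
  · simp [h0]
  · refine (totalDegree_monomial_le _ _).trans ?_
    have hle : Finsupp.single l 1 ≤ s := by
      rwa [Finsupp.single_le_iff, Nat.one_le_iff_ne_zero]
    have hadd := tsub_add_cancel_of_le hle
    have hs1 : (s - Finsupp.single l 1).sum (fun _ e => e) + 1 = s.sum (fun _ e => e) := by
      conv_rhs => rw [← hadd]
      rw [Finsupp.sum_add_index' (fun _ => rfl) (fun _ _ _ => rfl),
        Finsupp.sum_single_index rfl]
    have h2 : s.sum (fun _ e => e) ≤ d + 1 := (le_totalDegree hs).trans h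
    show (s - Finsupp.single l 1).sum (fun _ e => e) ≤ d
    omega

lemma totalDegree_Dop_le (σt : ℝ) (Ct : Matrix (Fin 3) (Fin 3) ℝ) (b₁ b₂ b₃ : ℝ)
    {P : MvPolynomial (Fin 3) ℝ} {d : ℕ} (h : P.totalDegree ≤ d + 1) :
    (Dop σt Ct b₁ b₂ b₃ P).totalDegree ≤ d + 2 := by
  have hpd : ∀ l, (pderiv l P).totalDegree ≤ d := fun l => totalDegree_pderiv_le' l P h
  refine (totalDegree_add _ _).trans (max_le ?_ ?_)
  · refine totalDegree_finsetSum_le fun l _ => ?_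
    refine (totalDegree_mul _ _).trans ?_
    have hq : ∀ (b : ℝ) (u v : Fin 3), (C b * X u * X v : MvPolynomial (Fin 3) ℝ).totalDegree ≤ 2 := by
      intro b u v
      have h1 : (C b * X u : MvPolynomial (Fin 3) ℝ).totalDegree ≤ 1 :=
        (totalDegree_mul _ _).trans (by simp [totalDegree_X, totalDegree_C])
      exact le_trans (totalDegree_mul _ _)
        (le_trans (add_le_add h1 (totalDegree_X v).le) (by norm_num))
    have hdrift : ((![C b₁ * X 1 * X 2, C b₂ * X 0 * X 2, C b₃ * X 0 * X 1] :
        Fin 3 → MvPolynomial (Fin 3) ℝ) l + ∑ j, C (Ct l j) * X j).totalDegree ≤ 2 := by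
      refine (totalDegree_add _ _).trans (max_le ?_ ?_)
      · fin_cases l
        · exact hq b₁ 1 2
        · exact hq b₂ 0 2
        · exact hq b₃ 0 1
      · refine le_trans (totalDegree_finsetSum_le fun j _ => ?_) one_le_two
        refine (totalDegree_mul _ _).trans ?_
        simp [totalDegree_X]
    have := add_le_add hdrift (hpd l)
    omega
  · refine (totalDegree_mul _ _).trans ?_
    simp only [totalDegree_C, zero_add]
    have hbound : ∀ l m : Fin 3,
        (C ((-((2:ℝ)⁻¹) • (Ct + Matrix.transpose Ct)) l m) *
          pderiv m (pderiv l P) : MvPolynomial (Fin 3) ℝ).totalDegree ≤ d := by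
      intro l m
      refine (totalDegree_mul _ _).trans ?_
      simp only [totalDegree_C, zero_add]
      exact totalDegree_pderiv_le' m _ ((hpd l).trans (Nat.le_succ d))
    exact le_trans (totalDegree_finsetSum_le fun l _ =>
      totalDegree_finsetSum_le fun m _ => hbound l m) (Nat.le_add_right d 2)

/-- Sign flip of all the variables. -/
noncomputable def NegMap : MvPolynomial (Fin 3) ℝ →ₐ[ℝ] MvPolynomial (Fin 3) ℝ :=
  aeval fun i : Fin 3 => -X i

lemma NegMap_pderiv (l : Fin 3) (P : MvPolynomial (Fin 3) ℝ) :
    NegMap (pderiv l P) = - pderiv l (NegMap P) := by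
  have hNX : ∀ j : Fin 3, NegMap (X j) = -X j := fun j => by simp [NegMap]
  induction P using MvPolynomial.induction_on with
  | C a =>
      have : NegMap (C a) = C a := by simp [NegMap, algebraMap_eq]
      simp [this, pderiv_C]
  | add p q hp hq => simp only [map_add, hp, hq]; ring
  | mul_X p i hp =>
      rcases eq_or_ne i l with rfl | hne
      · simp only [pderiv_mul, pderiv_X_self, mul_one, map_add, _root_.map_mul, map_neg,
          hp, hNX, mul_neg, neg_mul, neg_neg, neg_add]
      · simp only [pderiv_mul, pderiv_X_of_ne hne, mul_zero, add_zero, map_add,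
          _root_.map_mul, map_neg, hp, hNX, mul_neg, neg_mul, neg_neg]

lemma NegMap_monomial (s : Fin 3 →₀ ℕ) (a : ℝ) :
    NegMap (monomial s a) = ((-1 : ℝ) ^ (∑ l, s l)) • monomial s a := by
  rw [NegMap, aeval_monomial, monomial_eq]
  have h1 : (s.prod fun i e => (-X i : MvPolynomial (Fin 3) ℝ) ^ e)
      = ((-1 : MvPolynomial (Fin 3) ℝ) ^ (∑ l, s l)) * s.prod fun i e => (X i) ^ e := by
    rw [Finsupp.prod, Finsupp.prod]
    have hterm : ∀ i ∈ s.support, (-X i : MvPolynomial (Fin 3) ℝ) ^ s i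
        = (-1 : MvPolynomial (Fin 3) ℝ) ^ s i * (X i) ^ s i := fun i _ => neg_pow _ _
    rw [Finset.prod_congr rfl hterm, Finset.prod_mul_distrib, Finset.prod_pow_eq_pow_sum]
    congr 2
    exact Finset.sum_subset (Finset.subset_univ s.support)
      (fun i _ hi => Finsupp.notMem_support_iff.mp hi)
  rw [h1, smul_eq_C_mul]
  have hC : (C ((-1:ℝ) ^ (∑ l, s l)) : MvPolynomial (Fin 3) ℝ) = (-1) ^ (∑ l, s l) := by
    rw [map_pow]; norm_num
  rw [hC]
  simp only [algebraMap_eq]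
  ring

lemma coeff_NegMap (α : Fin 3 →₀ ℕ) (P : MvPolynomial (Fin 3) ℝ) :
    (NegMap P).coeff α = (-1 : ℝ) ^ (∑ l, α l) * P.coeff α := by
  induction P using MvPolynomial.induction_on' with
  | monomial s a =>
      rw [NegMap_monomial, coeff_smul]
      simp only [coeff_monomial]
      split_ifs with h
      · subst h; simp [smul_eq_mul]
      · simp
  | add p q hp hq => simp [hp, hq, mul_add]

lemma totalDegree_NegMap_le (P : MvPolynomial (Fin 3) ℝ) :
    (NegMap P).totalDegree ≤ P.totalDegree := by
  rw [MvPolynomial.totalDegree, MvPolynomial.totalDegree]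
  refine Finset.sup_mono fun α hα => ?_
  rw [MvPolynomial.mem_support_iff] at hα ⊢
  intro h0
  rw [coeff_NegMap, h0, mul_zero] at hα
  exact hα rfl

lemma Dop_neg_arg (σt : ℝ) (Ct : Matrix (Fin 3) (Fin 3) ℝ) (b₁ b₂ b₃ : ℝ)
    (P : MvPolynomial (Fin 3) ℝ) :
    Dop σt Ct b₁ b₂ b₃ (-P) = -Dop σt Ct b₁ b₂ b₃ P := by
  simp only [Dop, map_neg, mul_neg, Finset.sum_neg_distrib, neg_add]

lemma Dop_flip (σt : ℝ) (Ct : Matrix (Fin 3) (Fin 3) ℝ) (b₁ b₂ b₃ : ℝ)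
    (P : MvPolynomial (Fin 3) ℝ) :
    Dop σt Ct (-b₁) (-b₂) (-b₃) (NegMap P) = NegMap (Dop σt Ct b₁ b₂ b₃ P) := by
  have hNX : ∀ j : Fin 3, NegMap (X j) = -X j := fun j => by simp [NegMap]
  have hNC : ∀ a : ℝ, NegMap (C a) = C a := fun a => by simp [NegMap, algebraMap_eq]
  have hNS : ∀ l : Fin 3, NegMap (∑ j, C (Ct l j) * X j) = -∑ j, C (Ct l j) * X j := by
    intro l
    simp only [map_sum, _root_.map_mul, hNX, hNC, mul_neg, Finset.sum_neg_distrib]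
  have hNv : ∀ l : Fin 3,
      NegMap ((![C b₁ * X 1 * X 2, C b₂ * X 0 * X 2, C b₃ * X 0 * X 1] :
        Fin 3 → MvPolynomial (Fin 3) ℝ) l)
      = ![C b₁ * X 1 * X 2, C b₂ * X 0 * X 2, C b₃ * X 0 * X 1] l := by
    intro l
    fin_cases l
    · show NegMap (C b₁ * X 1 * X 2) = C b₁ * X 1 * X 2
      simp only [_root_.map_mul, hNX, hNC]; ring
    · show NegMap (C b₂ * X 0 * X 2) = C b₂ * X 0 * X 2
      simp only [_root_.map_mul, hNX, hNC]; ring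
    · show NegMap (C b₃ * X 0 * X 1) = C b₃ * X 0 * X 1
      simp only [_root_.map_mul, hNX, hNC]; ring
  have hv2 : ∀ l : Fin 3,
      (![C (-b₁) * X 1 * X 2, C (-b₂) * X 0 * X 2, C (-b₃) * X 0 * X 1] :
        Fin 3 → MvPolynomial (Fin 3) ℝ) l
      = -(![C b₁ * X 1 * X 2, C b₂ * X 0 * X 2, C b₃ * X 0 * X 1] l) := by
    intro l
    fin_cases l
    · show C (-b₁) * X 1 * X 2 = -(C b₁ * X 1 * X 2)
      rw [C_neg]; ring
    · show C (-b₂) * X 0 * X 2 = -(C b₂ * X 0 * X 2)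
      rw [C_neg]; ring
    · show C (-b₃) * X 0 * X 1 = -(C b₃ * X 0 * X 1)
      rw [C_neg]; ring
  simp only [Dop, map_add, _root_.map_mul, map_sum, NegMap_pderiv, hNS, hNv]
  refine congrArg₂ (· + ·) ?_ ?_
  · refine Finset.sum_congr rfl fun l _ => ?_
    rw [hv2 l]
    ring
  · simp only [hNC, map_neg, mul_neg, neg_neg]

/-- The triad generator acting on functions. -/
noncomputable def genE (σt : ℝ) (Ct : Matrix (Fin 3) (Fin 3) ℝ) :
    ℝ → ℝ → ℝ → ((Fin 3 → ℝ) → ℝ) → ((Fin 3 → ℝ) → ℝ) :=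
  fun b₁ b₂ b₃ f x =>
    (∑ l, ((![b₁ * x 1 * x 2, b₂ * x 0 * x 2, b₃ * x 0 * x 1] : Fin 3 → ℝ) l
            + Ct.mulVec x l) * fderiv ℝ f x (Pi.single l 1))
    + (σt ^ 2 / 2) * ∑ l, ∑ m, (-((2:ℝ)⁻¹) • (Ct + Ctᵀ)) l m *
        fderiv ℝ (fun y => fderiv ℝ f y (Pi.single l 1)) x (Pi.single m 1)

lemma genE_iterate (σt : ℝ) (Ct : Matrix (Fin 3) (Fin 3) ℝ) (b₁ b₂ b₃ : ℝ) (i : Fin 3) :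
    ∀ n : ℕ, ∀ x : Fin 3 → ℝ,
      (genE σt Ct b₁ b₂ b₃)^[n] (fun y => y i) x
        = MvPolynomial.eval x ((Dop σt Ct b₁ b₂ b₃)^[n] (X i)) := by
  intro n
  induction n with
  | zero => intro x; simp
  | succ n ih =>
      intro x
      rw [Function.iterate_succ_apply', Function.iterate_succ_apply']
      have hfn : (genE σt Ct b₁ b₂ b₃)^[n] (fun y => y i)
          = fun y => MvPolynomial.eval y ((Dop σt Ct b₁ b₂ b₃)^[n] (X i)) := funext ih
      rw [hfn]
      exact gen_step σt Ct b₁ b₂ b₃ _ x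

theorem main_aux (σt : ℝ) (Ct : Matrix (Fin 3) (Fin 3) ℝ) (b₁ b₂ b₃ : ℝ) (n : ℕ)
    (hn : 1 ≤ n) (i : Fin 3) :
    ∃ P Q : MvPolynomial (Fin 3) ℝ,
      P.totalDegree ≤ n + 1 ∧ Q.totalDegree ≤ n + 1 ∧
      (∀ x : Fin 3 → ℝ, (genE σt Ct b₁ b₂ b₃)^[n] (fun y => y i) x = MvPolynomial.eval x P) ∧
      (∀ x : Fin 3 → ℝ,
        (genE σt Ct (-b₁) (-b₂) (-b₃))^[n] (fun y => y i) x = MvPolynomial.eval x Q) ∧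
      (∀ α : Fin 3 →₀ ℕ, Odd (∑ l, α l) → P.coeff α = Q.coeff α) := by
  refine ⟨(Dop σt Ct b₁ b₂ b₃)^[n] (X i), (Dop σt Ct (-b₁) (-b₂) (-b₃))^[n] (X i),
    ?_, ?_, genE_iterate σt Ct b₁ b₂ b₃ i n, genE_iterate σt Ct (-b₁) (-b₂) (-b₃) i n, ?_⟩
  · clear hn
    induction n with
    | zero => simp [totalDegree_X]
    | succ n ih =>
        rw [Function.iterate_succ_apply']
        exact totalDegree_Dop_le σt Ct b₁ b₂ b₃ ih
  · clear hn
    induction n with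
    | zero => simp [totalDegree_X]
    | succ n ih =>
        rw [Function.iterate_succ_apply']
        exact totalDegree_Dop_le σt Ct _ _ _ ih
  · have hflip : ∀ m : ℕ, (Dop σt Ct (-b₁) (-b₂) (-b₃))^[m] (X i)
        = -NegMap ((Dop σt Ct b₁ b₂ b₃)^[m] (X i)) := by
      intro m
      induction m with
      | zero =>
          have : NegMap (X i : MvPolynomial (Fin 3) ℝ) = -X i := by simp [NegMap]
          simp [this]
      | succ m ihm =>
          rw [Function.iterate_succ_apply', Function.iterate_succ_apply', ihm,
            Dop_neg_arg, Dop_flip]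
    intro α hα
    rw [hflip n]
    rw [MvPolynomial.coeff_neg, coeff_NegMap, hα.neg_one_pow]
    ring

end TriadAux

/-- Structural lemma for the triad generator: for every `n ≥ 1`, `L̃ⁿx` is a vector
of polynomials of total degree at most `n+1`, and for every multi-index `α` with
`|α|` odd, the coefficient of `x^α` is invariant under
`(B̃₁,B̃₂,B̃₃) ↦ (−B̃₁,−B̃₂,−B̃₃)` (it depends on the `B̃ᵢ` only through products
`B̃ᵢB̃ⱼ`).  Here `C̃ = L̃ − Λ̃` and `Λ̃ = −(C̃ + C̃ᵀ)/2`. -/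
theorem triad_generator_polynomial_structure
    (σt : ℝ) (Ct : Matrix (Fin 3) (Fin 3) ℝ) :
    let Λt : Matrix (Fin 3) (Fin 3) ℝ := -((2:ℝ)⁻¹) • (Ct + Ctᵀ)
    let gen : ℝ → ℝ → ℝ → ((Fin 3 → ℝ) → ℝ) → ((Fin 3 → ℝ) → ℝ) :=
      fun b₁ b₂ b₃ f x =>
        (∑ l, ((![b₁ * x 1 * x 2, b₂ * x 0 * x 2, b₃ * x 0 * x 1] : Fin 3 → ℝ) l
                + Ct.mulVec x l) * fderiv ℝ f x (Pi.single l 1))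
        + (σt ^ 2 / 2) * ∑ l, ∑ m, Λt l m *
            fderiv ℝ (fun y => fderiv ℝ f y (Pi.single l 1)) x (Pi.single m 1)
    ∀ (b₁ b₂ b₃ : ℝ) (n : ℕ), 1 ≤ n → ∀ i : Fin 3,
      ∃ P Q : MvPolynomial (Fin 3) ℝ,
        P.totalDegree ≤ n + 1 ∧ Q.totalDegree ≤ n + 1 ∧
        (∀ x : Fin 3 → ℝ, (gen b₁ b₂ b₃)^[n] (fun y => y i) x = MvPolynomial.eval x P) ∧
        (∀ x : Fin 3 → ℝ, (gen (-b₁) (-b₂) (-b₃))^[n] (fun y => y i) x = MvPolynomial.eval x Q) ∧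
        (∀ α : Fin 3 →₀ ℕ, Odd (∑ l, α l) → P.coeff α = Q.coeff α) := by
  intro Λt gen b₁ b₂ b₃ n hn i
  exact main_aux σt Ct b₁ b₂ b₃ n hn i
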